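/- The symplectic Euler method defines a symplectic map: let Ω ⊆ ℝ^{2n} be open, H : ℝ^{2n} → ℝ be C², h ∈ ℝ, and let Ψ = (Ψ_p, Ψ_q) : Ω → ℝ^n × ℝ^n be a differentiable map satisfying, for all (p,q) ∈ Ω, Ψ_p(p,q) = p − h·∇_q H(Ψ_p(p,q), q) and Ψ_q(p,q) = q + h·∇_p H(Ψ_p(p,q), q). Then for every y ∈ Ω the Jacobian satisfies DΨ(y)ᵀ·J·DΨ(y) = J. -/

import Mathlib

open Matrix

noncomputable section

/-- Phase space ℝ^{2n}, with coordinates indexed by `Fin n ⊕ Fin n`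
(`Sum.inl` = momentum coordinates `p`, `Sum.inr` = position coordinates `q`). -/
abbrev Phase (n : ℕ) := EuclideanSpace ℝ (Fin n ⊕ Fin n)

def toPhase {n : ℕ} (v : (Fin n ⊕ Fin n) → ℝ) : Phase n := WithLp.toLp 2 v

def ofPhase {n : ℕ} (y : Phase n) : (Fin n ⊕ Fin n) → ℝ := y

/-- The canonical symplectic matrix `J = [[0, I], [-I, 0]]`. -/
def J (n : ℕ) : Matrix (Fin n ⊕ Fin n) (Fin n ⊕ Fin n) ℝ :=
  Matrix.fromBlocks 0 1 (-1) 0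

/-- The symplectic gradient (Hamiltonian vector field) `J⁻¹ ∇H`. -/
def sympGrad {n : ℕ} (H : Phase n → ℝ) (y : Phase n) : Phase n :=
  toPhase ((J n)⁻¹.mulVec (ofPhase (gradient H y)))

/-- The Jacobian matrix of a map on phase space. -/
def jacMatrix {n : ℕ} (f : Phase n → Phase n) (y : Phase n) :
    Matrix (Fin n ⊕ Fin n) (Fin n ⊕ Fin n) ℝ :=
  Matrix.of fun i j => ofPhase (fderiv ℝ f y (EuclideanSpace.single j 1)) i

/-- The mixed evaluation point `(Ψ_p(y), q)` of the symplectic Euler method. -/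
def mixedPoint {n : ℕ} (Ψ : Phase n → Phase n) (y : Phase n) : Phase n :=
  toPhase (Sum.elim (fun i => Ψ y (Sum.inl i)) (fun i => y (Sum.inr i)))

namespace Aux
variable {n : ℕ}

variable {n : ℕ}

lemma sum_apply' {ι : Type*} (s : Finset ι) (f : ι → Phase n) (j : Fin n ⊕ Fin n) :
    (∑ k ∈ s, f k) j = ∑ k ∈ s, f k j := by
  exact map_sum (EuclideanSpace.proj (𝕜 := ℝ) j) f s

lemma sum_single (v : Phase n) :
    ∑ k, v k • (EuclideanSpace.single k (1:ℝ) : Phase n) = v := by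
  ext j
  simp only [sum_apply', PiLp.smul_apply, smul_eq_mul, EuclideanSpace.single_apply,
    mul_ite, mul_one, mul_zero]
  cases j <;> simp

lemma jac_apply (f : Phase n → Phase n) (y : Phase n) (i j) :
    jacMatrix f y i j = fderiv ℝ f y (EuclideanSpace.single j 1) i := rfl

/-- coordinate fderiv from the full fderiv -/
lemma fderiv_coord {f : Phase n → Phase n} {y : Phase n} (hf : DifferentiableAt ℝ f y) (i) :
    fderiv ℝ (fun x => f x i) y = (EuclideanSpace.proj i).comp (fderiv ℝ f y) := by
  have : (fun x => f x i) = (EuclideanSpace.proj (𝕜 := ℝ) i) ∘ f := rfl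
  rw [this, fderiv_comp y (EuclideanSpace.proj i).differentiableAt hf,
    ContinuousLinearMap.fderiv]

lemma jac_comp {f g : Phase n → Phase n} {y : Phase n}
    (hg : DifferentiableAt ℝ g (f y)) (hf : DifferentiableAt ℝ f y) :
    jacMatrix (fun x => g (f x)) y = jacMatrix g (f y) * jacMatrix f y := by
  ext i j
  have hcomp : fderiv ℝ (fun x => g (f x)) y = (fderiv ℝ g (f y)).comp (fderiv ℝ f y) :=
    fderiv_comp y hg hf
  rw [jac_apply, hcomp, Matrix.mul_apply]
  simp only [ContinuousLinearMap.comp_apply]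
  conv_lhs => rw [← sum_single (fderiv ℝ f y (EuclideanSpace.single j 1)), map_sum]
  simp [jac_apply, sum_apply', PiLp.smul_apply, smul_eq_mul, mul_comm]


variable {n : ℕ}

lemma gradient_eq_comp (H : Phase n → ℝ) :
    gradient H = fun x => (InnerProductSpace.toDual ℝ (Phase n)).symm (fderiv ℝ H x) := rfl

lemma gradient_contDiff {H : Phase n → ℝ} (hH : ContDiff ℝ 2 H) :
    ContDiff ℝ 1 (gradient H) := by
  have h1 : ContDiff ℝ 1 (fderiv ℝ H) := hH.fderiv_right (by norm_num)
  rw [gradient_eq_comp]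
  exact ((InnerProductSpace.toDual ℝ (Phase n)).symm.contDiff).comp h1

lemma toDual_symm_coord (φ : StrongDual ℝ (Phase n)) (i : Fin n ⊕ Fin n) :
    (InnerProductSpace.toDual ℝ (Phase n)).symm φ i = φ (EuclideanSpace.single i 1) := by
  have h1 : ((InnerProductSpace.toDual ℝ (Phase n)).symm φ) i
      = inner ℝ (EuclideanSpace.single i (1:ℝ)) ((InnerProductSpace.toDual ℝ (Phase n)).symm φ) := by
    rw [EuclideanSpace.inner_single_left]; simp
  rw [h1, real_inner_comm, InnerProductSpace.toDual_symm_apply]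

lemma gradient_coord (H : Phase n → ℝ) (x : Phase n) (i : Fin n ⊕ Fin n) :
    gradient H x i = fderiv ℝ H x (EuclideanSpace.single i 1) :=
  toDual_symm_coord _ i

lemma jac_gradient_entry {H : Phase n → ℝ} (hH : ContDiff ℝ 2 H) (A0 : Phase n)
    (i j : Fin n ⊕ Fin n) :
    jacMatrix (gradient H) A0 i j
      = fderiv ℝ (fderiv ℝ H) A0 (EuclideanSpace.single j 1) (EuclideanSpace.single i 1) := by
  have h1 : ContDiff ℝ 1 (fderiv ℝ H) := hH.fderiv_right (by norm_num)
  have hd : DifferentiableAt ℝ (fderiv ℝ H) A0 := (h1.differentiable one_ne_zero) A0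
  have hg : DifferentiableAt ℝ (gradient H) A0 :=
    ((gradient_contDiff hH).differentiable one_ne_zero) A0
  have e0 : jacMatrix (gradient H) A0 i j
      = fderiv ℝ (fun x => gradient H x i) A0 (EuclideanSpace.single j 1) := by
    rw [fderiv_coord hg]; rfl
  have e1 : (fun x => gradient H x i)
      = (ContinuousLinearMap.apply ℝ ℝ (EuclideanSpace.single i 1)) ∘ (fderiv ℝ H) := by
    funext x; exact gradient_coord H x i
  rw [e0, e1, fderiv_comp A0 (ContinuousLinearMap.differentiableAt _) hd,
    ContinuousLinearMap.fderiv]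
  rfl

lemma jac_gradient_symm {H : Phase n → ℝ} (hH : ContDiff ℝ 2 H) (A0 : Phase n) :
    (jacMatrix (gradient H) A0)ᵀ = jacMatrix (gradient H) A0 := by
  have hs : IsSymmSndFDerivAt ℝ H A0 := hH.contDiffAt.isSymmSndFDerivAt (by norm_num)
  ext i j
  rw [Matrix.transpose_apply, jac_gradient_entry hH, jac_gradient_entry hH]
  exact hs _ _

lemma algebra {m : Type*} [Fintype m] [DecidableEq m] (h : ℝ)
    (A B C D P K Q : Matrix m m ℝ)
    (hP : Pᵀ = P) (hQ : Qᵀ = Q)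
    (hA : A = 1 - h • (K * A)) (hB : B = -(h • (K * B + Q)))
    (hC : C = h • (P * A)) (hD : D = 1 + h • (P * B + Kᵀ)) :
    (fromBlocks A B C D)ᵀ * fromBlocks 0 1 (-1) 0 * fromBlocks A B C D
      = fromBlocks (0 : Matrix m m ℝ) 1 (-1) 0 := by
  have hEA : A + h • (K * A) = 1 := by nth_rewrite 1 [hA]; abel
  have hEB : B + h • (K * B) = -(h • Q) := by
    nth_rewrite 1 [hB]; rw [smul_add]; abel
  have key2 : Aᵀ * D - Cᵀ * B = 1 := by
    have e1 : Aᵀ * D - Cᵀ * B = (A + h • (K * A))ᵀ := by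
      rw [hC, hD]
      simp only [Matrix.mul_add, Matrix.mul_one, Matrix.transpose_smul, Matrix.smul_mul,
        Matrix.mul_smul, Matrix.transpose_mul, Matrix.transpose_add, Matrix.transpose_one,
        Matrix.transpose_transpose, hP, smul_add, Matrix.mul_assoc]
      abel
    rw [e1, hEA, Matrix.transpose_one]
  have key1 : Aᵀ * C = Cᵀ * A := by
    rw [hC]
    simp only [Matrix.transpose_smul, Matrix.smul_mul, Matrix.mul_smul,
      Matrix.transpose_mul, hP, Matrix.mul_assoc]
  have key4 : Bᵀ * D = Dᵀ * B := by
    have e1 : Bᵀ * D - Dᵀ * B = (B + h • (K * B))ᵀ - (B + h • (K * B)) := by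
      rw [hD]
      simp only [Matrix.mul_add, Matrix.mul_one, Matrix.add_mul, Matrix.one_mul,
        Matrix.transpose_smul, Matrix.smul_mul, Matrix.mul_smul, Matrix.transpose_mul,
        Matrix.transpose_add, Matrix.transpose_one, Matrix.transpose_transpose, hP,
        smul_add, Matrix.mul_assoc]
      abel
    rw [hEB] at e1
    simp only [Matrix.transpose_neg, Matrix.transpose_smul, hQ] at e1
    exact sub_eq_zero.mp (e1.trans (sub_self _))
  have key3 : Bᵀ * C - Dᵀ * A = -1 := by
    have h2 := congrArg Matrix.transpose key2
    simp only [Matrix.transpose_sub, Matrix.transpose_mul, Matrix.transpose_transpose,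
      Matrix.transpose_one] at h2
    rw [← h2]; abel
  rw [Matrix.fromBlocks_transpose, Matrix.fromBlocks_multiply, Matrix.fromBlocks_multiply]
  rw [show Aᵀ * 0 + Cᵀ * (-1) = -Cᵀ by simp, show Aᵀ * 1 + Cᵀ * 0 = Aᵀ by simp,
      show Bᵀ * 0 + Dᵀ * (-1) = -Dᵀ by simp, show Bᵀ * 1 + Dᵀ * 0 = Bᵀ by simp]
  rw [show (-Cᵀ) * A + Aᵀ * C = 0 by rw [Matrix.neg_mul, neg_add_eq_sub, ← key1, sub_self],
      show (-Cᵀ) * B + Aᵀ * D = 1 by rw [Matrix.neg_mul, neg_add_eq_sub, key2],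
      show (-Dᵀ) * A + Bᵀ * C = -1 by rw [Matrix.neg_mul, neg_add_eq_sub, key3],
      show (-Dᵀ) * B + Bᵀ * D = 0 by rw [Matrix.neg_mul, neg_add_eq_sub, key4, sub_self]]

lemma proj_eq (k : Fin n ⊕ Fin n) :
    (fun x : Phase n => x k) = EuclideanSpace.proj (𝕜 := ℝ) k := rfl

end Aux

open Aux in
/-- the symplectic Euler method defines a symplectic map: if
`Ψ = (Ψ_p, Ψ_q)` is differentiable on an open `Ω` and satisfies
`Ψ_p(p,q) = p − h·∇_qH(Ψ_p(p,q), q)` and `Ψ_q(p,q) = q + h·∇_pH(Ψ_p(p,q), q)` on `Ω`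
for a C² Hamiltonian `H`, then `DΨ(y)ᵀ·J·DΨ(y) = J` on `Ω`. -/
theorem stmt16 (n : ℕ) (Ω : Set (Phase n)) (hΩ : IsOpen Ω)
    (H : Phase n → ℝ) (hH : ContDiff ℝ 2 H) (h : ℝ)
    (Ψ : Phase n → Phase n) (hdiff : ∀ y ∈ Ω, DifferentiableAt ℝ Ψ y)
    (hp : ∀ y ∈ Ω, ∀ i : Fin n,
      Ψ y (Sum.inl i) =
        y (Sum.inl i) - h * gradient H (mixedPoint Ψ y) (Sum.inr i))
    (hq : ∀ y ∈ Ω, ∀ i : Fin n,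
      Ψ y (Sum.inr i) =
        y (Sum.inr i) + h * gradient H (mixedPoint Ψ y) (Sum.inl i)) :
    ∀ y ∈ Ω, (jacMatrix Ψ y)ᵀ * J n * jacMatrix Ψ y = J n := by
  intro y hy
  have hΨy : DifferentiableAt ℝ Ψ y := hdiff y hy
  have hgC1 : ContDiff ℝ 1 (gradient H) := gradient_contDiff hH
  -- differentiability of mixedPoint Ψ at y
  have hmix : DifferentiableAt ℝ (mixedPoint Ψ) y := by
    have heq : mixedPoint Ψ = fun x =>
        (PiLp.continuousLinearEquiv 2 ℝ (fun _ : Fin n ⊕ Fin n => ℝ)).symm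
          (fun k => Sum.elim (fun i => Ψ x (Sum.inl i)) (fun i => x (Sum.inr i)) k) := by
      funext x; rfl
    rw [heq]
    have hpi : DifferentiableAt ℝ
        (fun x : Phase n => fun k => Sum.elim (fun i => Ψ x (Sum.inl i)) (fun i => x (Sum.inr i)) k) y := by
      apply differentiableAt_pi.2
      intro k
      cases k with
      | inl i =>
          rw [show (fun x : Phase n => Sum.elim (fun i => Ψ x (Sum.inl i)) (fun i => x (Sum.inr i)) (Sum.inl i)) = fun x : Phase n => (EuclideanSpace.proj (𝕜 := ℝ) (Sum.inl i : Fin n ⊕ Fin n)) (Ψ x) from rfl]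
          exact ((EuclideanSpace.proj (𝕜 := ℝ) (Sum.inl i : Fin n ⊕ Fin n)).differentiableAt).comp y hΨy
      | inr i =>
          rw [show (fun x : Phase n => Sum.elim (fun i => Ψ x (Sum.inl i)) (fun i => x (Sum.inr i)) (Sum.inr i)) = fun x : Phase n => x (Sum.inr i) from rfl, proj_eq]
          exact ContinuousLinearMap.differentiableAt _
    exact DifferentiableAt.comp y
      ((PiLp.continuousLinearEquiv 2 ℝ (fun _ : Fin n ⊕ Fin n => ℝ)).symm.differentiableAt) hpi
  set A0 := mixedPoint Ψ y with hA0
  set g : Phase n → Phase n := fun x => gradient H (mixedPoint Ψ x) with hgdef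
  have hgy : DifferentiableAt ℝ g y :=
    DifferentiableAt.comp (𝕜 := ℝ) (g := gradient H) (f := mixedPoint Ψ) y
      ((hgC1.differentiable one_ne_zero) A0) hmix
  set S := jacMatrix Ψ y with hSdef
  set M := jacMatrix (mixedPoint Ψ) y with hMdef
  set G := jacMatrix (gradient H) A0 with hGdef
  set N := jacMatrix g y with hNdef
  have hN : N = G * M := jac_comp (g := gradient H) (f := mixedPoint Ψ) ((hgC1.differentiable one_ne_zero) A0) hmix
  -- row computations for S
  have hStop : ∀ (i : Fin n) (j : Fin n ⊕ Fin n),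
      S (Sum.inl i) j = (if Sum.inl i = j then (1:ℝ) else 0) - h * N (Sum.inr i) j := by
    intro i j
    have hev : (fun x => Ψ x (Sum.inl i)) =ᶠ[nhds y]
        (fun x => x (Sum.inl i) - h * g x (Sum.inr i)) :=
      Filter.eventuallyEq_of_mem (hΩ.mem_nhds hy) (fun x hx => hp x hx i)
    have hcoordg : DifferentiableAt ℝ (fun x => g x (Sum.inr i)) y := by
      rw [show (fun x => g x (Sum.inr i)) = fun x => (EuclideanSpace.proj (𝕜:=ℝ) (Sum.inr i : Fin n ⊕ Fin n)) (g x) from rfl]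
      exact ((EuclideanSpace.proj (𝕜 := ℝ) (Sum.inr i : Fin n ⊕ Fin n)).differentiableAt).comp y hgy
    have hproj : DifferentiableAt ℝ (fun x : Phase n => x (Sum.inl i)) y := by
      rw [proj_eq]; exact ContinuousLinearMap.differentiableAt _
    have hder : fderiv ℝ (fun x => Ψ x (Sum.inl i)) y
        = fderiv ℝ (fun x => x (Sum.inl i) - h * g x (Sum.inr i)) y := hev.fderiv_eq
    have e1 : S (Sum.inl i) j = fderiv ℝ (fun x => Ψ x (Sum.inl i)) y (EuclideanSpace.single j 1) := by
      rw [hSdef, jac_apply, fderiv_coord hΨy]; rfl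
    rw [e1, hder, fderiv_fun_sub hproj ((hcoordg.const_mul h)),
      fderiv_const_mul hcoordg h, fderiv_coord hgy]
    rw [proj_eq, ContinuousLinearMap.fderiv]
    simp [EuclideanSpace.single_apply, jac_apply, hNdef]
  have hSbot : ∀ (i : Fin n) (j : Fin n ⊕ Fin n),
      S (Sum.inr i) j = (if Sum.inr i = j then (1:ℝ) else 0) + h * N (Sum.inl i) j := by
    intro i j
    have hev : (fun x => Ψ x (Sum.inr i)) =ᶠ[nhds y]
        (fun x => x (Sum.inr i) + h * g x (Sum.inl i)) :=
      Filter.eventuallyEq_of_mem (hΩ.mem_nhds hy) (fun x hx => hq x hx i)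
    have hcoordg : DifferentiableAt ℝ (fun x => g x (Sum.inl i)) y := by
      rw [show (fun x => g x (Sum.inl i)) = fun x => (EuclideanSpace.proj (𝕜:=ℝ) (Sum.inl i : Fin n ⊕ Fin n)) (g x) from rfl]
      exact ((EuclideanSpace.proj (𝕜 := ℝ) (Sum.inl i : Fin n ⊕ Fin n)).differentiableAt).comp y hgy
    have hproj : DifferentiableAt ℝ (fun x : Phase n => x (Sum.inr i)) y := by
      rw [proj_eq]; exact ContinuousLinearMap.differentiableAt _
    have hder : fderiv ℝ (fun x => Ψ x (Sum.inr i)) y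
        = fderiv ℝ (fun x => x (Sum.inr i) + h * g x (Sum.inl i)) y := hev.fderiv_eq
    have e1 : S (Sum.inr i) j = fderiv ℝ (fun x => Ψ x (Sum.inr i)) y (EuclideanSpace.single j 1) := by
      rw [hSdef, jac_apply, fderiv_coord hΨy]; rfl
    rw [e1, hder, fderiv_fun_add hproj ((hcoordg.const_mul h)),
      fderiv_const_mul hcoordg h, fderiv_coord hgy]
    rw [proj_eq, ContinuousLinearMap.fderiv]
    simp [EuclideanSpace.single_apply, jac_apply, hNdef]
  -- rows of M
  have hMtop : ∀ (i : Fin n) (j : Fin n ⊕ Fin n), M (Sum.inl i) j = S (Sum.inl i) j := by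
    intro i j
    have l1 : M (Sum.inl i) j
        = fderiv ℝ (fun x => mixedPoint Ψ x (Sum.inl i)) y (EuclideanSpace.single j 1) := by
      rw [hMdef, jac_apply, fderiv_coord hmix]; rfl
    have l2 : S (Sum.inl i) j
        = fderiv ℝ (fun x => Ψ x (Sum.inl i)) y (EuclideanSpace.single j 1) := by
      rw [hSdef, jac_apply, fderiv_coord hΨy]; rfl
    rw [l1, l2]
    rfl
  have hMbot : ∀ (i : Fin n) (j : Fin n ⊕ Fin n),
      M (Sum.inr i) j = (if Sum.inr i = j then (1:ℝ) else 0) := by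
    intro i j
    have l1 : M (Sum.inr i) j
        = fderiv ℝ (fun x => mixedPoint Ψ x (Sum.inr i)) y (EuclideanSpace.single j 1) := by
      rw [hMdef, jac_apply, fderiv_coord hmix]; rfl
    rw [l1, show (fun x => mixedPoint Ψ x (Sum.inr i)) = fun x : Phase n => x (Sum.inr i) from rfl,
      proj_eq, ContinuousLinearMap.fderiv]
    simp [EuclideanSpace.single_apply]
  -- blocks
  set A := S.toBlocks₁₁ with hA
  set B := S.toBlocks₁₂ with hB
  set C := S.toBlocks₂₁ with hC
  set D := S.toBlocks₂₂ with hD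
  set P := G.toBlocks₁₁ with hP
  set K' := G.toBlocks₁₂ with hK'
  set K := G.toBlocks₂₁ with hK
  set Q := G.toBlocks₂₂ with hQ
  have hSb : S = fromBlocks A B C D := (fromBlocks_toBlocks S).symm
  have hGb : G = fromBlocks P K' K Q := (fromBlocks_toBlocks G).symm
  have hGs := jac_gradient_symm hH A0
  have hPs : Pᵀ = P := by
    ext i j; exact congrFun (congrFun hGs (Sum.inl i)) (Sum.inl j)
  have hQs : Qᵀ = Q := by
    ext i j; exact congrFun (congrFun hGs (Sum.inr i)) (Sum.inr j)
  have hK's : K' = Kᵀ := by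
    ext i j; exact (congrFun (congrFun hGs (Sum.inl i)) (Sum.inr j)).symm
  have hMb : M = fromBlocks A B 0 1 := by
    ext i j
    cases i with
    | inl i =>
        rw [hMtop i j]
        cases j <;> rfl
    | inr i =>
        rw [hMbot i j]
        cases j <;> simp [Matrix.one_apply]
  have hNb : N = fromBlocks (P*A) (P*B + K') (K*A) (K*B + Q) := by
    rw [hN, hGb, hMb, fromBlocks_multiply]
    simp
  -- matrix equations
  have hAeq : A = 1 - h • (K * A) := by
    ext i j
    have h0 := hStop i (Sum.inl j)
    rw [hNb] at h0
    simp only [fromBlocks_apply₂₁, Sum.inl.injEq] at h0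
    show S (Sum.inl i) (Sum.inl j) = (1 - h • (K * A)) i j
    simp only [Matrix.sub_apply, Matrix.smul_apply, Matrix.one_apply, smul_eq_mul]
    linarith [h0]
  have hBeq : B = -(h • (K * B + Q)) := by
    ext i j
    have h0 := hStop i (Sum.inr j)
    rw [hNb] at h0
    simp only [fromBlocks_apply₂₂, reduceCtorEq, if_false, Matrix.add_apply] at h0
    show S (Sum.inl i) (Sum.inr j) = (-(h • (K * B + Q))) i j
    simp only [Matrix.neg_apply, Matrix.smul_apply, Matrix.add_apply, smul_eq_mul]
    linarith [h0]
  have hCeq : C = h • (P * A) := by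
    ext i j
    have h0 := hSbot i (Sum.inl j)
    rw [hNb] at h0
    simp only [fromBlocks_apply₁₁, reduceCtorEq, if_false] at h0
    show S (Sum.inr i) (Sum.inl j) = (h • (P * A)) i j
    simp only [Matrix.smul_apply, smul_eq_mul]
    linarith [h0]
  have hDeq : D = 1 + h • (P * B + Kᵀ) := by
    ext i j
    have h0 := hSbot i (Sum.inr j)
    rw [hNb, hK's] at h0
    simp only [fromBlocks_apply₁₂, Sum.inr.injEq, Matrix.add_apply, Matrix.transpose_apply] at h0
    show S (Sum.inr i) (Sum.inr j) = (1 + h • (P * B + Kᵀ)) i j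
    simp only [Matrix.add_apply, Matrix.smul_apply, Matrix.one_apply, smul_eq_mul,
      Matrix.transpose_apply]
    linarith [h0]
  rw [hSb, show J n = fromBlocks 0 1 (-1) 0 from rfl]
  exact algebra h A B C D P K Q hPs hQs hAeq hBeq hCeq hDeq
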